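/- Let G' be a finite directed graph containing a directed path P₂ and a sequence P₁ of distinct vertices disjoint from P₂ equipped with a linear order ≤_{P₁}, such that no vertex of P₁ has an outgoing edge in G' and every edge of G' whose head lies on P₂ is an edge of P₂. Assume the crossing hypothesis: whenever W is a walk in G' from a vertex b of P₂ to a vertex p of P₁ and W' is a walk in G' from a vertex b' of P₂ to a vertex p' of P₁ with b' <_{P₂} b and p' <_{P₁} p, the walks W and W' share a vertex. Then for any two vertices x and y of P₂ such that first_{G'}(x,P₁) and first_{G'}(y,P₁) both exist, one has first_{G'}(x,P₁) = first_{G'}(y,P₁). -/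

import Mathlib

/-- A walk in the directed graph with edge relation `E`: a nonempty list of vertices
starting at `u`, ending at `v`, with every consecutive pair an edge. -/
def IsWalk {V : Type*} (E : V → V → Prop) (l : List V) (u v : V) : Prop :=
  l ≠ [] ∧ l.head? = some u ∧ l.getLast? = some v ∧ l.Chain' E

/-- `v` is reachable from `u` in the graph with edge relation `E`. -/
def Reach {V : Type*} (E : V → V → Prop) (u v : V) : Prop :=
  ∃ l : List V, IsWalk E l u v

/-- `b` is the `≤_Q`-least vertex of the ordered vertex list `q` reachable from `s`. -/
def IsFirst {V : Type*} [DecidableEq V] (E : V → V → Prop) (s : V) (q : List V)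
    (b : V) : Prop :=
  b ∈ q ∧ Reach E s b ∧ ∀ c ∈ q, Reach E s c → q.idxOf b ≤ q.idxOf c

section Aux

variable {V : Type*} {E : V → V → Prop}

lemma reach_refl (u : V) : Reach E u u :=
  ⟨[u], by simp [IsWalk, List.Chain']⟩

lemma reach_trans {u v w : V} (h1 : Reach E u v) (h2 : Reach E v w) : Reach E u w := by
  obtain ⟨l, hne, hh, hl, hc⟩ := h1
  obtain ⟨l', hne', hh', hl', hc'⟩ := h2
  match l' with
  | [] => exact absurd rfl hne'
  | [b] =>
    simp at hh' hl'
    subst hh'; subst hl'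
    exact ⟨l, hne, hh, hl, hc⟩
  | b :: c :: ts =>
    simp at hh'
    subst hh'
    refine ⟨l ++ c :: ts, by simp [hne], ?_, ?_, ?_⟩
    · obtain ⟨a, la, rfl⟩ := List.exists_cons_of_ne_nil hne
      simpa using hh
    · rw [List.getLast?_append_cons]
      rw [List.getLast?_cons_cons] at hl'
      exact hl'
    · rw [List.Chain', List.isChain_append]
      refine ⟨hc, hc'.tail, ?_⟩
      intro a ha d hd
      simp [hl] at ha
      simp at hd
      subst ha; subst hd
      exact (List.isChain_cons_cons.mp hc').1

lemma reach_of_mem_walk_left {l : List V} {u v z : V} (hw : IsWalk E l u v) (hz : z ∈ l) :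
    Reach E u z := by
  obtain ⟨hne, hh, hl, hc⟩ := hw
  obtain ⟨s, t, rfl⟩ := List.append_of_mem hz
  refine ⟨s ++ [z], by simp, ?_, by simp, hc.prefix ⟨t, by simp⟩⟩
  match s with
  | [] => simpa using hh
  | a :: s' => simpa using hh

lemma reach_of_mem_walk_right {l : List V} {u v z : V} (hw : IsWalk E l u v) (hz : z ∈ l) :
    Reach E z v := by
  obtain ⟨hne, hh, hl, hc⟩ := hw
  obtain ⟨s, t, rfl⟩ := List.append_of_mem hz
  refine ⟨z :: t, by simp, by simp, ?_, hc.suffix ⟨s, rfl⟩⟩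
  rwa [List.getLast?_append_cons] at hl

lemma reach_edge {u v : V} (h : E u v) : Reach E u v :=
  ⟨[u, v], by simp [IsWalk, h, List.Chain']⟩

lemma reach_chain {p : List V} (hc : p.Chain' E) (i j : ℕ) (hij : i ≤ j) (hj : j < p.length) :
    Reach E (p.get ⟨i, lt_of_le_of_lt hij hj⟩) (p.get ⟨j, hj⟩) := by
  induction j with
  | zero =>
    interval_cases i
    exact reach_refl _
  | succ j ih =>
    rcases Nat.eq_or_lt_of_le hij with rfl | hlt
    · exact reach_refl _
    · have hj' : j < p.length := Nat.lt_of_succ_lt hj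
      have h1 := ih (Nat.lt_succ_iff.mp hlt) hj'
      have h2 : E (p.get ⟨j, hj'⟩) (p.get ⟨j+1, hj⟩) :=
        List.isChain_iff_getElem.mp hc j (by omega)
      exact reach_trans h1 (reach_edge h2)

lemma reach_mem {p : List V} [DecidableEq V] (hc : p.Chain' E) {x y : V}
    (hx : x ∈ p) (hy : y ∈ p) (hxy : p.idxOf x ≤ p.idxOf y) : Reach E x y := by
  have hxl := List.idxOf_lt_length_iff.mpr hx
  have hyl := List.idxOf_lt_length_iff.mpr hy
  have := reach_chain hc (p.idxOf x) (p.idxOf y) hxy hyl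
  rwa [List.idxOf_get, List.idxOf_get] at this

end Aux

/-- Under the structural hypotheses on `P₁, P₂` and the crossing
hypothesis, any two vertices of `P₂` whose firsts on `P₁` exist have the same first. -/
theorem stmt_5 {V : Type*} [Fintype V] [DecidableEq V] (E : V → V → Prop)
    (p₂ p₁ : List V) (hp₂nd : p₂.Nodup) (hp₂ch : p₂.Chain' E) (hp₁nd : p₁.Nodup)
    (hdisj : ∀ x ∈ p₁, x ∉ p₂)
    (hnoout : ∀ x ∈ p₁, ∀ y, ¬ E x y)
    (hhead : ∀ x y, E x y → y ∈ p₂ → ∃ i, p₂[i]? = some x ∧ p₂[i+1]? = some y)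
    (hcross : ∀ (lw lw' : List V) (b q b' q' : V),
      b ∈ p₂ → q ∈ p₁ → b' ∈ p₂ → q' ∈ p₁ →
      IsWalk E lw b q → IsWalk E lw' b' q' →
      p₂.idxOf b' < p₂.idxOf b → p₁.idxOf q' < p₁.idxOf q →
      ∃ x, x ∈ lw ∧ x ∈ lw')
    (x y fx fy : V) (hx : x ∈ p₂) (hy : y ∈ p₂)
    (hfx : IsFirst E x p₁ fx) (hfy : IsFirst E y p₁ fy) :
    fx = fy := by
  have key : ∀ x y fx fy, x ∈ p₂ → y ∈ p₂ → IsFirst E x p₁ fx → IsFirst E y p₁ fy →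
      p₂.idxOf x ≤ p₂.idxOf y → fx = fy := by
    intro x y fx fy hx hy hfx hfy hxy
    have hRxy : Reach E x y := reach_mem hp₂ch hx hy hxy
    have hRxfy : Reach E x fy := reach_trans hRxy hfy.2.1
    have h1 : p₁.idxOf fx ≤ p₁.idxOf fy := hfx.2.2 fy hfy.1 hRxfy
    rcases eq_or_lt_of_le h1 with heq | hlt
    · have hfxl := List.idxOf_lt_length_iff.mpr hfx.1
      have hfyl := List.idxOf_lt_length_iff.mpr hfy.1
      rw [← List.idxOf_get hfxl, ← List.idxOf_get hfyl]
      congr 1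
      exact Fin.ext heq
    · exfalso
      have hne : x ≠ y := by
        rintro rfl
        exact absurd (hfy.2.2 fx hfx.1 hfx.2.1) (not_le.mpr hlt)
      have hxylt : p₂.idxOf x < p₂.idxOf y := by
        rcases lt_or_eq_of_le hxy with h | h
        · exact h
        · exfalso
          apply hne
          have hxl := List.idxOf_lt_length_iff.mpr hx
          have hyl := List.idxOf_lt_length_iff.mpr hy
          rw [← List.idxOf_get hxl, ← List.idxOf_get hyl]
          congr 1
          exact Fin.ext h
      obtain ⟨lw, hlw⟩ := hfy.2.1
      obtain ⟨lw', hlw'⟩ := hfx.2.1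
      obtain ⟨z, hz, hz'⟩ := hcross lw lw' y fy x fx hy hfy.1 hx hfx.1 hlw hlw' hxylt hlt
      have hRyz : Reach E y z := reach_of_mem_walk_left hlw hz
      have hRzfx : Reach E z fx := reach_of_mem_walk_right hlw' hz'
      exact absurd (hfy.2.2 fx hfx.1 (reach_trans hRyz hRzfx)) (not_le.mpr hlt)
  rcases le_total (p₂.idxOf x) (p₂.idxOf y) with h | h
  · exact key x y fx fy hx hy hfx hfy h
  · exact (key y x fy fx hy hx hfy hfx h).symm
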